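/- Define V_n(z) = R_n'(z) R_{n-1}(z) - R_{n-1}'(z) R_n(z) for n ≥ 1. Then for every n ≥ 1 and every zero z_{n,j} of R_n, the complex number z_{n,j}^{-(n-2)} (z_{n,j} - 1)^{-1} V_n(z_{n,j}) is real and strictly positive. -/

import Mathlib

open Polynomial MeasureTheory Finset
open scoped ComplexConjugate

/-- The polynomials `R_n` defined by the three term recurrence
`R_{n+1}(z) = [(1+i c_{n+1}) z + (1-i c_{n+1})] R_n(z) - 4 d_{n+1} z R_{n-1}(z)`. -/
noncomputable def Rpoly (c d : ℕ → ℝ) : ℕ → Polynomial ℂ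
  | 0 => 1
  | 1 => C (1 + Complex.I * (c 1 : ℂ)) * X + C (1 - Complex.I * (c 1 : ℂ))
  | (n + 2) =>
      (C (1 + Complex.I * (c (n + 2) : ℂ)) * X + C (1 - Complex.I * (c (n + 2) : ℂ))) *
          Rpoly c d (n + 1)
        - C (4 * (d (n + 2) : ℂ)) * X * Rpoly c d n

/-- The polynomials `Q_n` satisfying the same recurrence with `Q_0 = 0`, `Q_1 = 2 d_1`. -/
noncomputable def Qpoly (c d : ℕ → ℝ) : ℕ → Polynomial ℂ
  | 0 => 0
  | 1 => C (2 * (d 1 : ℂ))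
  | (n + 2) =>
      (C (1 + Complex.I * (c (n + 2) : ℂ)) * X + C (1 - Complex.I * (c (n + 2) : ℂ))) *
          Qpoly c d (n + 1)
        - C (4 * (d (n + 2) : ℂ)) * X * Qpoly c d n


/-- `g` is a parameter sequence for the sequence `d_1, d_2, …`:
`0 ≤ g_0 < 1`, `0 < g_n < 1` for `n ≥ 1`, and `d_n = (1 - g_{n-1}) g_n` for `n ≥ 1`. -/
def IsParamSeq (d g : ℕ → ℝ) : Prop :=
  0 ≤ g 0 ∧ g 0 < 1 ∧ (∀ n, 1 ≤ n → 0 < g n ∧ g n < 1) ∧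
    ∀ n, 1 ≤ n → d n = (1 - g (n - 1)) * g n

/-- `d_1, d_2, …` is a positive chain sequence. -/
def IsPositiveChainSeq (d : ℕ → ℝ) : Prop := ∃ g, IsParamSeq d g

/-- real polynomials obtained from `Rpoly` by the substitution `z = (x+i)/(x-i)`. -/
noncomputable def gp (c d : ℕ → ℝ) : ℕ → Polynomial ℝ
  | 0 => 1
  | 1 => C 2 * X - C (2 * c 1)
  | (n + 2) => (C 2 * X - C (2 * c (n + 2))) * gp c d (n + 1)
      - C (4 * d (n + 2)) * (1 + X ^ 2) * gp c d n

/-- leading coefficients of `gp`. -/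
noncomputable def Lc (d : ℕ → ℝ) : ℕ → ℝ
  | 0 => 1
  | 1 => 2
  | (n + 2) => 2 * Lc d (n + 1) - 4 * d (n + 2) * Lc d n

section basic
variable {c d : ℕ → ℝ}

lemma dpos (hd : IsPositiveChainSeq fun n => d (n + 1)) :
    ∀ n, 1 ≤ n → 0 < d (n + 1) := by
  obtain ⟨h, h0, h01, hmem, hrel⟩ := hd
  intro n hn
  have := hrel n hn
  simp only at this
  rw [this]
  have hh : 0 < h n := (hmem n hn).1
  have hh2 : h (n - 1) < 1 := by
    rcases Nat.eq_or_lt_of_le hn with h1 | h1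
    · simpa [← h1] using h01
    · exact (hmem (n - 1) (by omega)).2
  have : 0 < 1 - h (n-1) := by linarith
  exact mul_pos this hh

lemma Lc_pos (hd : IsPositiveChainSeq fun n => d (n + 1)) : ∀ n, 0 < Lc d n := by
  obtain ⟨h, h0, h01, hmem, hrel⟩ := hd
  have key : ∀ n, 0 < Lc d n ∧ 2 * (1 - h n) * Lc d n ≤ Lc d (n + 1) := by
    intro n
    induction n with
    | zero =>
      refine ⟨by norm_num [Lc], ?_⟩
      have : Lc d 0 = 1 := rfl
      have : Lc d 1 = 2 := rfl
      simp only [this]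
      nlinarith [h0]
    | succ n ih =>
      obtain ⟨hpos, hle⟩ := ih
      have hhn : 0 < h (n + 1) ∧ h (n + 1) < 1 := hmem (n + 1) (by omega)
      have hh1 : h n < 1 := by
        rcases Nat.eq_zero_or_pos n with rfl | hn
        · exact h01
        · exact (hmem n hn).2
      have hd2 : d (n + 2) = (1 - h n) * h (n + 1) := by
        have := hrel (n + 1) (by omega)
        simpa using this
      have hLsucc : 0 < Lc d (n + 1) := lt_of_lt_of_le (by nlinarith) hle
      constructor
      · exact hLsucc
      · have hrec : Lc d (n + 2) = 2 * Lc d (n + 1) - 4 * d (n + 2) * Lc d n := rfl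
        rw [hrec, hd2]
        nlinarith [hhn.1, hhn.2]
  exact fun n => (key n).1

lemma natDeg_lin (a : ℝ) : (C 2 * X - C a : Polynomial ℝ).natDegree ≤ 1 :=
  (natDegree_sub_le _ _).trans (max_le ((natDegree_C_mul_le _ _).trans natDegree_X_le)
    (by simp))

lemma natDeg_quad (k : ℝ) : (C k * (1 + X ^ 2) : Polynomial ℝ).natDegree ≤ 2 :=
  (natDegree_C_mul_le _ _).trans ((natDegree_add_le _ _).trans (by simp))

lemma gp_deg_coeff : ∀ n : ℕ, (gp c d n).natDegree ≤ n ∧ (gp c d n).coeff n = Lc d n := by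
  have key : ∀ n, ((gp c d n).natDegree ≤ n ∧ (gp c d n).coeff n = Lc d n) ∧
      ((gp c d (n+1)).natDegree ≤ n+1 ∧ (gp c d (n+1)).coeff (n+1) = Lc d (n+1)) := by
    intro n
    induction n with
    | zero =>
      refine ⟨⟨?_, ?_⟩, ?_, ?_⟩
      · simp [gp]
      · simp [gp, Lc]
      · exact natDeg_lin _
      · show (C 2 * X - C (2 * c 1)).coeff 1 = Lc d 1
        simp [coeff_sub, coeff_C, Lc]
    | succ n ih =>
      obtain ⟨⟨hd0, hc0⟩, hd1, hc1⟩ := ih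
      have hrec : gp c d (n+2) = (C 2 * X - C (2 * c (n+2))) * gp c d (n+1)
          - C (4 * d (n+2)) * (1 + X ^ 2) * gp c d n := rfl
      refine ⟨⟨hd1, hc1⟩, ?_, ?_⟩
      · rw [hrec]
        refine le_trans (natDegree_sub_le _ _) (max_le ?_ ?_)
        · exact le_trans natDegree_mul_le (by have := natDeg_lin (2 * c (n+2)); omega)
        · exact le_trans natDegree_mul_le (by have := natDeg_quad (4 * d (n+2)); omega)
      · rw [hrec]
        have e1 : ((C 2 * X - C (2 * c (n+2))) * gp c d (n+1)).coeff (n+2)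
            = 2 * (gp c d (n+1)).coeff (n+1) - 2 * c (n+2) * (gp c d (n+1)).coeff (n+2) := by
          rw [sub_mul, coeff_sub, mul_assoc, coeff_C_mul, coeff_C_mul,
            coeff_X_mul (gp c d (n+1)) (n+1)]
        have e2 : (C (4 * d (n+2)) * (1 + X ^ 2) * gp c d n).coeff (n+2)
            = 4 * d (n+2) * ((gp c d n).coeff (n+2) + (gp c d n).coeff n) := by
          rw [mul_assoc, coeff_C_mul, add_mul, one_mul, coeff_add,
            coeff_X_pow_mul (gp c d n) 2 n]
        have z1 : (gp c d (n+1)).coeff (n+2) = 0 :=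
          coeff_eq_zero_of_natDegree_lt (by omega)
        have z2 : (gp c d n).coeff (n+2) = 0 :=
          coeff_eq_zero_of_natDegree_lt (by omega)
        have hL : Lc d (n+2) = 2 * Lc d (n+1) - 4 * d (n+2) * Lc d n := rfl
        rw [coeff_sub, e1, e2, z1, z2, hc0, hc1, hL]
        ring
  exact fun n => (key n).1

lemma gp_leadingCoeff (hd : IsPositiveChainSeq fun n => d (n + 1)) (n : ℕ) :
    (gp c d n).natDegree = n ∧ (gp c d n).leadingCoeff = Lc d n := by
  obtain ⟨h1, h2⟩ := gp_deg_coeff (c:=c) (d:=d) n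
  have hL := Lc_pos hd n
  have hne : (gp c d n).coeff n ≠ 0 := by rw [h2]; exact ne_of_gt hL
  have hdeg : (gp c d n).natDegree = n := le_antisymm h1 (le_natDegree_of_ne_zero hne)
  exact ⟨hdeg, by rwa [leadingCoeff, hdeg]⟩

lemma R_eval_one : ∀ n : ℕ, (Rpoly c d n).eval 1 = (Lc d n : ℂ) := by
  have key : ∀ n, (Rpoly c d n).eval 1 = (Lc d n : ℂ) ∧
      (Rpoly c d (n+1)).eval 1 = (Lc d (n+1) : ℂ) := by
    intro n
    induction n with
    | zero =>
      constructor
      · simp [Rpoly, Lc]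
      · show ((C (1 + Complex.I * (c 1 : ℂ)) * X + C (1 - Complex.I * (c 1 : ℂ))).eval 1) = _
        have : Lc d 1 = 2 := rfl
        rw [this]
        simp
        push_cast
        ring
    | succ n ih =>
      obtain ⟨ih0, ih1⟩ := ih
      refine ⟨ih1, ?_⟩
      have hrec : Rpoly c d (n+2) =
          (C (1 + Complex.I * (c (n+2) : ℂ)) * X + C (1 - Complex.I * (c (n+2) : ℂ))) *
            Rpoly c d (n+1) - C (4 * (d (n+2) : ℂ)) * X * Rpoly c d n := rfl
      have hL : Lc d (n+2) = 2 * Lc d (n+1) - 4 * d (n+2) * Lc d n := rfl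
      rw [hrec]
      simp only [eval_sub, eval_mul, eval_add, eval_C, eval_X, mul_one]
      rw [ih0, ih1, hL]
      push_cast
      ring
  exact fun n => (key n).1

/-- the key pointwise identity relating `Rpoly` and `gp`. -/
lemma R_eq_g (n : ℕ) (z : ℂ) (hz : z ≠ 1) :
    (2 * Complex.I) ^ n * (Rpoly c d n).eval z =
      (z - 1) ^ n * ((gp c d n).map (algebraMap ℝ ℂ)).eval (Complex.I * (1 + z) / (z - 1)) := by
  have hz1 : z - 1 ≠ 0 := sub_ne_zero.mpr hz
  set t : ℂ := Complex.I * (1 + z) / (z - 1) with ht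
  have key : ∀ m, ((2 * Complex.I) ^ m * (Rpoly c d m).eval z =
        (z - 1) ^ m * ((gp c d m).map (algebraMap ℝ ℂ)).eval t) ∧
      ((2 * Complex.I) ^ (m+1) * (Rpoly c d (m+1)).eval z =
        (z - 1) ^ (m+1) * ((gp c d (m+1)).map (algebraMap ℝ ℂ)).eval t) := by
    intro m
    have ht1 : ∀ a : ℝ, (z - 1) * (2 * t - 2 * a) =
        2 * Complex.I * ((1 + Complex.I * a) * z + (1 - Complex.I * a)) := by
      intro a
      rw [ht]
      field_simp
      linear_combination ((a:ℂ)*(1 - z)) * Complex.I_sq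
    have ht2 : (z - 1) ^ 2 * (1 + t ^ 2) = -4 * z := by
      rw [ht]
      field_simp
      linear_combination ((1+z)^2) * Complex.I_sq
    induction m with
    | zero =>
      constructor
      · simp [Rpoly, gp]
      · show (2 * Complex.I) ^ 1 * ((C (1 + Complex.I * (c 1 : ℂ)) * X +
            C (1 - Complex.I * (c 1 : ℂ))).eval z) =
          (z - 1) ^ 1 * ((C 2 * X - C (2 * c 1) : Polynomial ℝ).map (algebraMap ℝ ℂ)).eval t
        simp only [Polynomial.map_sub, Polynomial.map_mul, Polynomial.map_C, Polynomial.map_X,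
          eval_sub, eval_mul, eval_C, eval_X, eval_add, pow_one, Complex.coe_algebraMap]
        have h1 := ht1 (c 1)
        push_cast at h1 ⊢
        linear_combination -h1
    | succ m ih =>
      obtain ⟨ih0, ih1⟩ := ih
      refine ⟨ih1, ?_⟩
      have hrecR : Rpoly c d (m+2) =
          (C (1 + Complex.I * (c (m+2) : ℂ)) * X + C (1 - Complex.I * (c (m+2) : ℂ))) *
            Rpoly c d (m+1) - C (4 * (d (m+2) : ℂ)) * X * Rpoly c d m := rfl
      have hrecg : gp c d (m+2) = (C 2 * X - C (2 * c (m+2))) * gp c d (m+1)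
          - C (4 * d (m+2)) * (1 + X ^ 2) * gp c d m := rfl
      rw [hrecR, hrecg]
      simp only [Polynomial.map_sub, Polynomial.map_mul, Polynomial.map_add, Polynomial.map_C,
        Polynomial.map_X, Polynomial.map_one, Polynomial.map_pow, eval_sub, eval_mul, eval_add,
        eval_C, eval_X, eval_one, eval_pow, Complex.coe_algebraMap]
      have h1 := ht1 (c (m+2))
      push_cast at h1 ht2 ⊢
      set G1 := ((gp c d (m+1)).map (algebraMap ℝ ℂ)).eval t
      set G0 := ((gp c d m).map (algebraMap ℝ ℂ)).eval t
      set R1 := (Rpoly c d (m+1)).eval z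
      set R0 := (Rpoly c d m).eval z
      have e1 : (2*Complex.I)^(m+2) * (((1 + Complex.I * (c (m+2):ℂ)) * z +
          (1 - Complex.I * (c (m+2):ℂ))) * R1 - 4 * (d (m+2):ℂ) * z * R0) =
          (2*Complex.I) * ((1 + Complex.I * (c (m+2):ℂ)) * z + (1 - Complex.I * (c (m+2):ℂ))) *
            ((2*Complex.I)^(m+1) * R1) - (2*Complex.I)^2 * (4 * (d (m+2):ℂ) * z) *
            ((2*Complex.I)^m * R0) := by ring
      rw [e1, ih0, ih1]
      linear_combination (-((z-1)^(m+1) * G1)) * h1 + (4*(d (m+2):ℂ)*(z-1)^m*G0) * ht2 +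
        (-(16*(d (m+2):ℂ)*z*(z-1)^m*G0)) * Complex.I_sq
  exact (key n).1

lemma R_deriv_g (n : ℕ) (z : ℂ) (hz : z ≠ 1) :
    (2 * Complex.I) ^ n * (derivative (Rpoly c d n)).eval z =
      (n : ℂ) * (z - 1) ^ (n - 1) *
          ((gp c d n).map (algebraMap ℝ ℂ)).eval (Complex.I * (1 + z) / (z - 1)) +
        (z - 1) ^ n * (((derivative (gp c d n)).map (algebraMap ℝ ℂ)).eval
            (Complex.I * (1 + z) / (z - 1)) * (-2 * Complex.I / (z - 1) ^ 2)) := by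
  have hz1 : z - 1 ≠ 0 := sub_ne_zero.mpr hz
  set t : ℂ := Complex.I * (1 + z) / (z - 1) with ht
  set Gc : Polynomial ℂ := (gp c d n).map (algebraMap ℝ ℂ) with hGc
  have hfun : (fun w => (2 * Complex.I) ^ n * (Rpoly c d n).eval w) =ᶠ[nhds z]
      (fun w => (w - 1) ^ n * Gc.eval (Complex.I * (1 + w) / (w - 1))) := by
    filter_upwards [(isOpen_ne (x := (1:ℂ))).mem_nhds hz] with w hw
    exact R_eq_g n w hw
  have hL : HasDerivAt (fun w => (2 * Complex.I) ^ n * (Rpoly c d n).eval w)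
      ((2 * Complex.I) ^ n * (derivative (Rpoly c d n)).eval z) z :=
    (Polynomial.hasDerivAt _ z).const_mul _
  have h1 : HasDerivAt (fun w : ℂ => Complex.I * (1 + w) / (w - 1))
      (-2 * Complex.I / (z - 1) ^ 2) z := by
    have hu : HasDerivAt (fun w : ℂ => Complex.I * (1 + w)) Complex.I z := by
      simpa using ((hasDerivAt_id z).const_add (1 : ℂ)).const_mul Complex.I
    have hv : HasDerivAt (fun w : ℂ => w - 1) 1 z := (hasDerivAt_id z).sub_const 1
    have := hu.fun_div hv hz1
    refine this.congr_deriv ?_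
    ring
  have h2 : HasDerivAt (fun w => Gc.eval w) ((derivative Gc).eval t) t :=
    Polynomial.hasDerivAt Gc t
  have h3 : HasDerivAt (fun w => Gc.eval (Complex.I * (1 + w) / (w - 1)))
      ((derivative Gc).eval t * (-2 * Complex.I / (z - 1) ^ 2)) z := by have := h2.comp z h1; exact this
  have h4 : HasDerivAt (fun w : ℂ => (w - 1) ^ n) ((n : ℂ) * (z - 1) ^ (n - 1)) z := by
    simpa using ((hasDerivAt_id z).sub_const 1).fun_pow n
  have h5 := h4.fun_mul h3
  have e1 : (2 * Complex.I) ^ n * (derivative (Rpoly c d n)).eval z =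
      deriv (fun w => (2 * Complex.I) ^ n * (Rpoly c d n).eval w) z := hL.deriv.symm
  rw [e1, hfun.deriv_eq, h5.deriv]
  have hd : (derivative Gc) = (derivative (gp c d n)).map (algebraMap ℝ ℂ) :=
    (derivative_map _ _)
  rw [hd]

/-- sign of a product of differences. -/
lemma prod_sign_aux {nn : ℕ} (s : Finset (Fin nn)) (x : Fin nn → ℝ) (y : ℝ) (jc : ℕ)
    (hcard : (s.filter (fun k => y < x k)).card = jc)
    (hne : ∀ k ∈ s, x k ≠ y) :
    0 < (-1 : ℝ) ^ jc * ∏ k ∈ s, (y - x k) := by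
  classical
  rw [← Finset.prod_filter_mul_prod_filter_not s (fun k => y < x k)]
  have h1 : ∏ k ∈ s.filter (fun k => y < x k), (y - x k)
      = (-1 : ℝ) ^ jc * ∏ k ∈ s.filter (fun k => y < x k), (x k - y) := by
    rw [← hcard, ← Finset.prod_const (-1 : ℝ), ← Finset.prod_mul_distrib]
    exact Finset.prod_congr rfl (fun k _ => by ring)
  rw [h1]
  set A := ∏ k ∈ s.filter (fun k => y < x k), (x k - y) with hA
  set B := ∏ k ∈ s.filter (fun k => ¬ y < x k), (y - x k) with hB
  have h2 : 0 < ∏ k ∈ s.filter (fun k => y < x k), (x k - y) :=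
    Finset.prod_pos (fun k hk => by
      simp only [Finset.mem_filter] at hk
      linarith [hk.2])
  have h3 : 0 < ∏ k ∈ s.filter (fun k => ¬ y < x k), (y - x k) :=
    Finset.prod_pos (fun k hk => by
      simp only [Finset.mem_filter, not_lt] at hk
      have := hne k hk.1
      cases lt_or_eq_of_le hk.2 with
      | inl h => linarith
      | inr h => exact absurd h this
  )
  have key : (-1 : ℝ) ^ jc * (-1 : ℝ) ^ jc = 1 := by
    rw [← pow_add]
    exact Even.neg_one_pow ⟨jc, rfl⟩
  have h4 : (-1 : ℝ) ^ jc * (((-1 : ℝ) ^ jc * A) * B) = A * B := by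
    rw [show (-1 : ℝ) ^ jc * (((-1 : ℝ) ^ jc * A) * B) = ((-1 : ℝ)^jc * (-1:ℝ)^jc) * (A * B)
      from by ring, key, one_mul]
  rw [h4]
  exact mul_pos h2 h3

lemma card_filter_lt {nn j : ℕ} (hj : j ≤ nn) :
    ((Finset.univ : Finset (Fin nn)).filter (fun k : Fin nn => (k : ℕ) < j)).card = j := by
  have hset : (Finset.univ : Finset (Fin nn)).filter (fun k : Fin nn => (k : ℕ) < j)
      = (Finset.univ : Finset (Fin j)).map (Fin.castLEEmb hj) := by
    ext k
    simp only [Finset.mem_filter, Finset.mem_univ, true_and, Finset.mem_map]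
    constructor
    · intro hk
      exact ⟨⟨(k : ℕ), hk⟩, by simp [Fin.castLEEmb]⟩
    · rintro ⟨a, rfl⟩
      simp [Fin.castLEEmb]
  rw [hset, Finset.card_map, Finset.card_univ, Fintype.card_fin]

lemma ivt_zero {p : Polynomial ℝ} {a b : ℝ} (hab : a < b)
    (hsign : p.eval a * p.eval b < 0) :
    ∃ y, a < y ∧ y < b ∧ p.eval y = 0 := by
  have hc : ContinuousOn (fun u => p.eval u) (Set.Icc a b) := p.continuous.continuousOn
  rcases lt_or_ge (p.eval a) 0 with h1 | h1
  · have h2 : 0 < p.eval b := by nlinarith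
    have h0 : (0 : ℝ) ∈ Set.Ioo (p.eval a) (p.eval b) := ⟨h1, h2⟩
    obtain ⟨y, hy, hy0⟩ := intermediate_value_Ioo hab.le hc h0
    exact ⟨y, hy.1, hy.2, hy0⟩
  · have hne0 : p.eval a ≠ 0 := by
      intro h
      rw [h] at hsign
      simp at hsign
    have h1' : 0 < p.eval a := lt_of_le_of_ne h1 (Ne.symm hne0)
    have h2 : p.eval b < 0 := by nlinarith
    have h0 : (0 : ℝ) ∈ Set.Ioo (p.eval b) (p.eval a) := ⟨h2, h1'⟩
    obtain ⟨y, hy, hy0⟩ := intermediate_value_Ioo' hab.le hc h0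
    exact ⟨y, hy.1, hy.2, hy0⟩

/-- the inductive invariant: `gp n` has `n` simple real zeros, listed in decreasing
order, at which `gp (n-1)` has alternating signs. -/
def InvP (c d : ℕ → ℝ) (n : ℕ) : Prop :=
  ∃ x : Fin n → ℝ, StrictAnti x ∧
    gp c d n = C (Lc d n) * ∏ j, (X - C (x j)) ∧
    ∀ j : Fin n, 0 < (-1 : ℝ) ^ (j : ℕ) * (gp c d (n - 1)).eval (x j)

lemma InvP_base : InvP c d 1 := by
  refine ⟨fun _ => c 1, ?_, ?_, ?_⟩
  · intro a b hab
    rw [Subsingleton.elim a b] at hab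
    exact absurd hab (lt_irrefl _)
  · have h1 : Lc d 1 = 2 := rfl
    have h2 : gp c d 1 = C 2 * X - C (2 * c 1) := rfl
    rw [h1, h2, Fin.prod_univ_one, show ((2 : ℝ) * c 1) = 2 * c 1 from rfl]
    rw [show (C (2 * c 1) : Polynomial ℝ) = C 2 * C (c 1) from by rw [map_mul]]
    ring
  · intro j
    simp [show gp c d 0 = 1 from rfl]

lemma InvP_step (hd : IsPositiveChainSeq fun n => d (n + 1)) (m : ℕ)
    (ih : InvP c d (m + 1)) : InvP c d (m + 2) := by
  classical
  obtain ⟨x, hanti, hfact, hsgn0⟩ := ih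
  have hsgn : ∀ j : Fin (m+1), 0 < (-1:ℝ)^(j:ℕ) * (gp c d m).eval (x j) := by
    simpa using hsgn0
  have hl1 : 0 < Lc d (m+1) := Lc_pos hd (m+1)
  have hl2 : 0 < Lc d (m+2) := Lc_pos hd (m+2)
  have hdpos : 0 < d (m+2) := dpos hd (m+1) (by omega)
  have hrec : gp c d (m+2) = (C 2 * X - C (2 * c (m+2))) * gp c d (m+1)
      - C (4 * d (m+2)) * (1 + X^2) * gp c d m := rfl
  have evalx : ∀ j, (gp c d (m+1)).eval (x j) = 0 := by
    intro j
    rw [hfact]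
    simp only [eval_mul, eval_prod, eval_C]
    rw [Finset.prod_eq_zero (Finset.mem_univ j) (by simp)]
    ring
  have hev2 : ∀ j, (gp c d (m+2)).eval (x j)
      = -(4 * d (m+2) * (1 + x j ^ 2) * (gp c d m).eval (x j)) := by
    intro j
    rw [hrec]
    simp only [eval_sub, eval_mul, eval_add, eval_C, eval_X, eval_one, eval_pow]
    rw [evalx j]
    ring
  have hsg2 : ∀ j : Fin (m+1), 0 < (-1:ℝ)^((j:ℕ)+1) * (gp c d (m+2)).eval (x j) := by
    intro j
    rw [hev2 j, pow_succ]
    have hx2 : (0:ℝ) < 1 + x j ^ 2 := by positivity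
    nlinarith [mul_pos (mul_pos (by linarith : (0:ℝ) < 4 * d (m+2)) hx2) (hsgn j)]
  -- degree facts
  obtain ⟨hdeg2, hlc2⟩ := gp_leadingCoeff hd (m+2)
  have hne2 : gp c d (m+2) ≠ 0 := by
    intro h
    rw [h] at hlc2
    simp at hlc2
    exact absurd hlc2.symm hl2.ne'
  have hdegpos : 0 < (gp c d (m+2)).degree := by
    rw [degree_eq_natDegree hne2, hdeg2]
    exact_mod_cast (by omega : 0 < m + 2)
  -- a point above all roots where gp (m+2) is positive
  have htop : ∃ b, x 0 < b ∧ 0 < (gp c d (m+2)).eval b := by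
    have ht := Polynomial.tendsto_atTop_of_leadingCoeff_nonneg _ hdegpos
      (by rw [hlc2]; exact hl2.le)
    obtain ⟨b, hb1, hb2⟩ := ((ht.eventually_gt_atTop 0).and (Filter.eventually_gt_atTop (x 0))).exists
    exact ⟨b, hb2, hb1⟩
  -- a point below all roots where (-1)^m * gp (m+2) is positive
  have hbot : ∃ a, a < x (Fin.last m) ∧ 0 < (-1:ℝ)^m * (gp c d (m+2)).eval a := by
    set q : Polynomial ℝ := C ((-1:ℝ)^m) * ((gp c d (m+2)).comp (-X)) with hq
    have hevq : ∀ u, q.eval u = (-1:ℝ)^m * (gp c d (m+2)).eval (-u) := by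
      intro u
      simp [hq, eval_comp]
    have hndX : ((-X : Polynomial ℝ)).natDegree = 1 := by simp
    have hlcq : q.leadingCoeff = Lc d (m+2) := by
      rw [hq, leadingCoeff_mul, leadingCoeff_C, leadingCoeff_comp (by rw [hndX]; omega)]
      rw [hlc2, hdeg2]
      have : ((-X : Polynomial ℝ)).leadingCoeff = -1 := by simp
      rw [this]
      have he : (-1:ℝ)^m * (-1:ℝ)^(m+2) = 1 := by
        rw [← pow_add]
        exact Even.neg_one_pow ⟨m+1, by ring⟩
      calc (-1:ℝ)^m * (Lc d (m+2) * (-1)^(m+2))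
          = ((-1:ℝ)^m * (-1)^(m+2)) * Lc d (m+2) := by ring
        _ = Lc d (m+2) := by rw [he, one_mul]
    have hqne : q ≠ 0 := by
      intro h
      rw [h] at hlcq
      simp at hlcq
      exact absurd hlcq.symm hl2.ne'
    have hndq : q.natDegree = m + 2 := by
      rw [hq, natDegree_C_mul (by positivity : ((-1:ℝ)^m) ≠ 0), natDegree_comp, hndX, hdeg2]
      ring
    have hdq : 0 < q.degree := by
      rw [degree_eq_natDegree hqne, hndq]
      exact_mod_cast (by omega : 0 < m + 2)
    have ht := Polynomial.tendsto_atTop_of_leadingCoeff_nonneg _ hdq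
      (by rw [hlcq]; exact hl2.le)
    obtain ⟨u, hu1, hu2⟩ := ((ht.eventually_gt_atTop 0).and
      (Filter.eventually_gt_atTop (-(x (Fin.last m))))).exists
    refine ⟨-u, by linarith, ?_⟩
    have := hevq u
    rw [this] at hu1
    exact hu1
  obtain ⟨b, hxb, hb⟩ := htop
  obtain ⟨a, hax, ha⟩ := hbot
  -- middle roots
  have hmidex : ∀ j : Fin m, ∃ y, x j.succ < y ∧ y < x j.castSucc ∧
      (gp c d (m+2)).eval y = 0 := by
    intro j
    have hlt : x j.succ < x j.castSucc := hanti (Fin.castSucc_lt_succ (i := j))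
    have h1 := hsg2 j.castSucc
    have h2 := hsg2 j.succ
    rw [Fin.coe_castSucc] at h1
    rw [Fin.val_succ] at h2
    have key : (-1:ℝ)^((j:ℕ)+1) * (-1:ℝ)^((j:ℕ)+1+1) = -1 :=
      by rw [← pow_add]; exact Odd.neg_one_pow ⟨(j:ℕ)+1, by ring⟩
    have h3 := mul_pos h1 h2
    set Ec := (gp c d (m+2)).eval (x j.castSucc)
    set Es := (gp c d (m+2)).eval (x j.succ)
    have h4 : ((-1:ℝ)^((j:ℕ)+1) * Ec) * ((-1:ℝ)^((j:ℕ)+1+1) * Es) = -(Ec * Es) := by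
      rw [show ((-1:ℝ)^((j:ℕ)+1) * Ec) * ((-1:ℝ)^((j:ℕ)+1+1) * Es)
        = ((-1:ℝ)^((j:ℕ)+1) * (-1:ℝ)^((j:ℕ)+1+1)) * (Ec * Es) from by ring, key]
      ring
    rw [h4] at h3
    exact ivt_zero hlt (by linarith)
  choose mid hm1 hm2 hm3 using hmidex
  -- top root
  have htr : ∃ y, x 0 < y ∧ y < b ∧ (gp c d (m+2)).eval y = 0 := by
    have h1 := hsg2 0
    simp only [Fin.val_zero, pow_one, zero_add] at h1
    exact ivt_zero hxb (by nlinarith)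
  obtain ⟨ytop, hyt1, _, hyt3⟩ := htr
  -- bottom root
  have hbr : ∃ y, a < y ∧ y < x (Fin.last m) ∧ (gp c d (m+2)).eval y = 0 := by
    have h1 := hsg2 (Fin.last m)
    rw [Fin.val_last] at h1
    have key : (-1:ℝ)^m * (-1:ℝ)^(m+1) = -1 :=
      by rw [← pow_add]; exact Odd.neg_one_pow ⟨m, by ring⟩
    have h3 := mul_pos ha h1
    set Ea := (gp c d (m+2)).eval a
    set El := (gp c d (m+2)).eval (x (Fin.last m))
    have h4 : ((-1:ℝ)^m * Ea) * ((-1:ℝ)^(m+1) * El) = -(Ea * El) := by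
      rw [show ((-1:ℝ)^m * Ea) * ((-1:ℝ)^(m+1) * El)
        = ((-1:ℝ)^m * (-1:ℝ)^(m+1)) * (Ea * El) from by ring, key]
      ring
    rw [h4] at h3
    exact ivt_zero hax (by linarith)
  obtain ⟨ybot, _, hyb2, hyb3⟩ := hbr
  -- assemble the new root vector
  set Y : Fin (m+2) → ℝ := Fin.cons ytop (Fin.snoc mid ybot) with hY
  have hY0 : Y 0 = ytop := by simp [hY]
  have hYc : ∀ j : Fin m, Y j.castSucc.succ = mid j := by
    intro j
    rw [hY, Fin.cons_succ, Fin.snoc_castSucc]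
  have hYl : Y (Fin.last m).succ = ybot := by
    rw [hY, Fin.cons_succ, Fin.snoc_last]
  -- zeros
  have hYz : ∀ i, (gp c d (m+2)).eval (Y i) = 0 := by
    intro i
    induction i using Fin.cases with
    | zero => rw [hY0]; exact hyt3
    | succ i' =>
      induction i' using Fin.lastCases with
      | last => rw [hYl]; exact hyb3
      | cast j => rw [hYc j]; exact hm3 j
  -- bounds
  have hYub : ∀ i : Fin (m+2), ∀ k : Fin (m+1), (k:ℕ) < (i:ℕ) → Y i < x k := by
    intro i
    induction i using Fin.cases with
    | zero => intro k hk; simp at hk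
    | succ i' =>
      induction i' using Fin.lastCases with
      | last =>
        intro k hk
        rw [hYl]
        have : x (Fin.last m) ≤ x k := hanti.antitone (Fin.le_last k)
        linarith
      | cast j =>
        intro k hk
        rw [hYc j]
        have hkj : k ≤ j.castSucc := by
          rw [Fin.le_def]
          rw [Fin.val_succ, Fin.coe_castSucc] at hk
          rw [Fin.coe_castSucc]
          omega
        have : x j.castSucc ≤ x k := hanti.antitone hkj
        linarith [hm2 j]
  have hYlb : ∀ i : Fin (m+2), ∀ k : Fin (m+1), (i:ℕ) ≤ (k:ℕ) → x k < Y i := by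
    intro i
    induction i using Fin.cases with
    | zero =>
      intro k _
      rw [hY0]
      have : x k ≤ x 0 := hanti.antitone (Fin.zero_le k)
      linarith
    | succ i' =>
      induction i' using Fin.lastCases with
      | last =>
        intro k hk
        rw [Fin.val_succ, Fin.val_last] at hk
        have : (k:ℕ) ≤ m := by omega
        omega
      | cast j =>
        intro k hk
        rw [hYc j]
        have hkj : j.succ ≤ k := by
          rw [Fin.le_def]
          rw [Fin.val_succ, Fin.coe_castSucc] at hk
          rw [Fin.val_succ]
          omega
        have : x k ≤ x j.succ := hanti.antitone hkj
        linarith [hm1 j]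
  have hYanti : StrictAnti Y := by
    intro i i' hlt
    rw [Fin.lt_def] at hlt
    have hi'1 : 1 ≤ (i':ℕ) := by omega
    have hi'le : (i':ℕ) ≤ m + 1 := by omega
    set k : Fin (m+1) := ⟨(i':ℕ) - 1, by omega⟩ with hk
    have h1 : Y i' < x k := hYub i' k (by show (i':ℕ) - 1 < (i':ℕ); omega)
    have h2 : x k < Y i := hYlb i k (by show (i:ℕ) ≤ (i':ℕ) - 1; omega)
    linarith
  -- factorization of gp (m+2)
  have hfact2 : gp c d (m+2) = C (Lc d (m+2)) * ∏ i, (X - C (Y i)) := by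
    have hmon : (∏ i, (X - C (Y i)) : Polynomial ℝ).Monic :=
      monic_prod_of_monic _ _ (fun i _ => monic_X_sub_C _)
    have hdq : (∏ i, (X - C (Y i)) : Polynomial ℝ).natDegree = m + 2 := by
      rw [natDegree_prod _ _ (fun i _ => X_sub_C_ne_zero _)]
      simp [natDegree_X_sub_C]
    have hqd : (C (Lc d (m+2)) * ∏ i, (X - C (Y i)) : Polynomial ℝ).natDegree = m + 2 := by
      rw [natDegree_C_mul hl2.ne', hdq]
    have hqc : (C (Lc d (m+2)) * ∏ i, (X - C (Y i)) : Polynomial ℝ).coeff (m+2)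
        = Lc d (m+2) := by
      rw [coeff_C_mul]
      have : (∏ i, (X - C (Y i)) : Polynomial ℝ).coeff (m+2) = 1 := by
        have := hmon.coeff_natDegree
        rwa [hdq] at this
      rw [this, mul_one]
    have hpc : (gp c d (m+2)).coeff (m+2) = Lc d (m+2) := (gp_deg_coeff (m+2)).2
    have hdiff : gp c d (m+2) - C (Lc d (m+2)) * ∏ i, (X - C (Y i)) = 0 := by
      apply eq_zero_of_natDegree_lt_card_of_eval_eq_zero _ hYanti.injective
      · intro i
        rw [eval_sub, hYz i, eval_mul, eval_prod]
        rw [Finset.prod_eq_zero (Finset.mem_univ i) (by simp)]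
        ring
      · have hle : (gp c d (m+2) - C (Lc d (m+2)) * ∏ i, (X - C (Y i))).natDegree ≤ m + 1 := by
          rw [natDegree_le_iff_coeff_eq_zero]
          intro N hN
          rw [coeff_sub]
          rcases eq_or_lt_of_le (by omega : m + 2 ≤ N) with h | h
          · rw [← h, hpc, hqc]
            ring
          · rw [coeff_eq_zero_of_natDegree_lt (by omega : (gp c d (m+2)).natDegree < N),
              coeff_eq_zero_of_natDegree_lt (by rw [hqd]; omega)]
            ring
        rw [Fintype.card_fin]
        omega
    exact sub_eq_zero.mp hdiff
  -- signs of gp (m+1) at the new roots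
  have hsgn2 : ∀ i : Fin (m+2), 0 < (-1:ℝ)^(i:ℕ) * (gp c d (m+1)).eval (Y i) := by
    intro i
    have hfilter : (Finset.univ.filter (fun k : Fin (m+1) => Y i < x k))
        = Finset.univ.filter (fun k : Fin (m+1) => (k:ℕ) < (i:ℕ)) := by
      ext k
      simp only [Finset.mem_filter, Finset.mem_univ, true_and]
      constructor
      · intro hk
        by_contra hc
        exact absurd hk (not_lt.mpr (hYlb i k (by omega)).le)
      · intro hk
        exact hYub i k hk
    have hcard : (Finset.univ.filter (fun k : Fin (m+1) => Y i < x k)).card = (i:ℕ) := by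
      rw [hfilter]
      exact card_filter_lt (by omega)
    have hne : ∀ k ∈ (Finset.univ : Finset (Fin (m+1))), x k ≠ Y i := by
      intro k _
      rcases lt_or_ge ((k:ℕ)) ((i:ℕ)) with h | h
      · exact ne_of_gt (hYub i k h)
      · exact ne_of_lt (hYlb i k h)
    have hp := prod_sign_aux Finset.univ x (Y i) (i:ℕ) hcard hne
    have hev : (gp c d (m+1)).eval (Y i) = Lc d (m+1) * ∏ k, (Y i - x k) := by
      rw [hfact]
      simp [eval_prod]
    rw [hev, show (-1:ℝ)^(i:ℕ) * (Lc d (m+1) * ∏ k, (Y i - x k))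
      = Lc d (m+1) * ((-1:ℝ)^(i:ℕ) * ∏ k, (Y i - x k)) from by ring]
    exact mul_pos hl1 hp
  exact ⟨Y, hYanti, hfact2, by simpa using hsgn2⟩

lemma InvP_all (hd : IsPositiveChainSeq fun n => d (n + 1)) :
    ∀ n, 1 ≤ n → InvP c d n := by
  intro n hn
  obtain ⟨m, rfl⟩ : ∃ m, n = m + 1 := ⟨n - 1, by omega⟩
  clear hn
  induction m with
  | zero => exact InvP_base
  | succ m ih => exact InvP_step hd m ih

lemma root_real_pos (hd : IsPositiveChainSeq fun n => d (n + 1)) (n : ℕ) (hn : 1 ≤ n)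
    (t : ℂ) (ht : ((gp c d n).map (algebraMap ℝ ℂ)).eval t = 0) :
    ∃ τ : ℝ, t = (τ : ℂ) ∧
      0 < ((derivative (gp c d n)).eval τ) * ((gp c d (n - 1)).eval τ) := by
  classical
  obtain ⟨x, hanti, hfact, hsgn⟩ := InvP_all hd n hn
  have hl : 0 < Lc d n := Lc_pos hd n
  have hmap : ((gp c d n).map (algebraMap ℝ ℂ))
      = C ((Lc d n : ℂ)) * ∏ j, (X - C ((x j : ℂ))) := by
    rw [hfact]
    simp [Polynomial.map_mul, Polynomial.map_prod, Polynomial.map_sub, Polynomial.map_C,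
      Polynomial.map_X, Complex.coe_algebraMap]
  rw [hmap] at ht
  simp only [eval_mul, eval_C, eval_prod, eval_sub, eval_X] at ht
  have hLne : ((Lc d n : ℂ)) ≠ 0 := by
    exact_mod_cast hl.ne'
  have hprod0 : ∏ j, (t - (x j : ℂ)) = 0 := by
    rcases mul_eq_zero.mp ht with h | h
    · exact absurd h hLne
    · exact h
  obtain ⟨j, _, hj⟩ := Finset.prod_eq_zero_iff.mp hprod0
  have htj : t = (x j : ℂ) := by
    have := sub_eq_zero.mp hj
    exact this
  refine ⟨x j, htj, ?_⟩
  -- value of the derivative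
  have hprodform : (∏ k, (X - C (x k)) : Polynomial ℝ)
      = (Multiset.map (fun a => X - C a) (Finset.univ.val.map x)).prod := by
    rw [Multiset.map_map]
    rfl
  have hrmem : x j ∈ Finset.univ.val.map x :=
    Multiset.mem_map_of_mem _ (Finset.mem_val.mpr (Finset.mem_univ j))
  have hder : (derivative (gp c d n)).eval (x j)
      = Lc d n * ∏ k ∈ Finset.univ.erase j, (x j - x k) := by
    rw [hfact, derivative_C_mul, eval_mul, eval_C, hprodform,
      eval_multiset_prod_X_sub_C_derivative hrmem]
    congr 1
    have he : (Finset.univ.val.map x).erase (x j) = (Finset.univ.val.erase j).map x :=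
      (Multiset.map_erase x hanti.injective j Finset.univ.val).symm
    rw [he, Multiset.map_map, ← Finset.erase_val]
    rfl
  -- sign of the derivative
  have hfilter2 : ((Finset.univ.erase j).filter (fun k : Fin n => x j < x k))
      = Finset.univ.filter (fun k : Fin n => (k:ℕ) < (j:ℕ)) := by
    ext k
    simp only [Finset.mem_filter, Finset.mem_erase, Finset.mem_univ, true_and, and_true]
    constructor
    · rintro ⟨hkj, hlt⟩
      by_contra hc
      push_neg at hc
      rcases eq_or_lt_of_le hc with h | h
      · exact hkj (Fin.ext h.symm)
      · have : x k < x j := hanti (Fin.lt_def.mpr h)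
        linarith
    · intro hk
      have hlt : k < j := Fin.lt_def.mpr hk
      exact ⟨ne_of_lt hlt, hanti hlt⟩
  have hcard2 : ((Finset.univ.erase j).filter (fun k : Fin n => x j < x k)).card = (j:ℕ) := by
    rw [hfilter2]
    exact card_filter_lt j.isLt.le
  have hne2 : ∀ k ∈ Finset.univ.erase j, x k ≠ x j := by
    intro k hk
    exact fun h => (Finset.mem_erase.mp hk).1 (hanti.injective h)
  have hp := prod_sign_aux (Finset.univ.erase j) x (x j) (j:ℕ) hcard2 hne2
  have h1 : 0 < (-1:ℝ)^(j:ℕ) * ((derivative (gp c d n)).eval (x j)) := by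
    rw [hder, show (-1:ℝ)^(j:ℕ) * (Lc d n * ∏ k ∈ Finset.univ.erase j, (x j - x k))
      = Lc d n * ((-1:ℝ)^(j:ℕ) * ∏ k ∈ Finset.univ.erase j, (x j - x k)) from by ring]
    exact mul_pos hl hp
  have h2 := hsgn j
  have key : (-1 : ℝ) ^ (j:ℕ) * (-1 : ℝ) ^ (j:ℕ) = 1 := by
    rw [← pow_add]
    exact Even.neg_one_pow ⟨(j:ℕ), rfl⟩
  have h3 := mul_pos h1 h2
  rw [show ((-1:ℝ)^(j:ℕ) * ((derivative (gp c d n)).eval (x j)))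
      * ((-1:ℝ)^(j:ℕ) * ((gp c d (n-1)).eval (x j)))
      = ((-1:ℝ)^(j:ℕ) * (-1:ℝ)^(j:ℕ))
        * (((derivative (gp c d n)).eval (x j)) * ((gp c d (n-1)).eval (x j))) from by ring,
    key, one_mul] at h3
  exact h3

end basic


/-- With `V_n = R_n' R_{n-1} - R_{n-1}' R_n`, for every `n ≥ 1` and every zero `z` of `R_n`
the number `z^{-(n-2)} (z-1)^{-1} V_n(z)` is real and strictly positive. -/
theorem stmt5 (c d : ℕ → ℝ) (hd : IsPositiveChainSeq fun n => d (n + 1)) :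
    ∀ n, 1 ≤ n → ∀ z : ℂ, (Rpoly c d n).eval z = 0 →
      ∃ r : ℝ, 0 < r ∧
        (r : ℂ) = z ^ (-(n : ℤ) + 2) * (z - 1)⁻¹ *
          ((Polynomial.derivative (Rpoly c d n)).eval z * (Rpoly c d (n - 1)).eval z -
            (Polynomial.derivative (Rpoly c d (n - 1))).eval z * (Rpoly c d n).eval z) := by
  intro n hn z hz
  obtain ⟨m, rfl⟩ : ∃ m, n = m + 1 := ⟨n - 1, by omega⟩
  have h2I : (2 * Complex.I) ≠ 0 := by simp [Complex.I_ne_zero]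
  -- z ≠ 1
  have hz1 : z ≠ 1 := by
    intro h
    rw [h, R_eval_one] at hz
    exact absurd (by exact_mod_cast hz) (Lc_pos hd (m+1)).ne'
  have hsub : z - 1 ≠ 0 := sub_ne_zero.mpr hz1
  set t : ℂ := Complex.I * (1 + z) / (z - 1) with htdef
  -- t is a root of the complexified gp
  have hg0 : ((gp c d (m+1)).map (algebraMap ℝ ℂ)).eval t = 0 := by
    have h := R_eq_g (c := c) (d := d) (m+1) z hz1
    rw [hz] at h
    have h2 : (z - 1) ^ (m+1) * ((gp c d (m+1)).map (algebraMap ℝ ℂ)).eval t = 0 := by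
      rw [← h]; ring
    rcases mul_eq_zero.mp h2 with h3 | h3
    · exact absurd h3 (pow_ne_zero _ hsub)
    · exact h3
  obtain ⟨τ, htau, hpos⟩ := root_real_pos hd (m+1) (by omega) t hg0
  simp only [Nat.add_sub_cancel] at hpos
  set P1 : ℝ := (derivative (gp c d (m+1))).eval τ with hP1
  set P0 : ℝ := (gp c d m).eval τ with hP0
  set w : ℂ := (τ : ℂ) - Complex.I with hwdef
  have hw : w ≠ 0 := by
    intro h
    have := congrArg Complex.im h
    simp [hwdef] at this
  have hwi : (τ : ℂ) + Complex.I ≠ 0 := by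
    intro h
    have := congrArg Complex.im h
    simp at this
  -- z in terms of τ
  have hzw : z * w = (τ : ℂ) + Complex.I := by
    have h1 : t * (z - 1) = Complex.I * (1 + z) := by
      rw [htdef, div_mul_cancel₀ _ hsub]
    rw [htau] at h1
    rw [hwdef]
    linear_combination h1
  have hz0 : z ≠ 0 := by
    intro h
    rw [h, zero_mul] at hzw
    exact hwi hzw.symm
  have hzm1 : z - 1 = 2 * Complex.I / w := by
    rw [eq_div_iff hw]
    linear_combination hzw
  -- evaluations of the mapped polynomials at t
  have hevP0 : ((gp c d m).map (algebraMap ℝ ℂ)).eval t = (P0 : ℂ) := by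
    rw [htau, hP0, eval_map, ← Complex.coe_algebraMap, Polynomial.eval₂_at_apply]
  have hevP1 : (((derivative (gp c d (m+1))).map (algebraMap ℝ ℂ))).eval t = (P1 : ℂ) := by
    rw [htau, hP1, eval_map, ← Complex.coe_algebraMap, Polynomial.eval₂_at_apply]
  -- value of R_m at z
  have hB := R_eq_g (c := c) (d := d) m z hz1
  rw [hevP0] at hB
  -- value of R_{m+1}' at z
  have hA := R_deriv_g (c := c) (d := d) (m+1) z hz1
  rw [hevP1, hg0, Nat.add_sub_cancel] at hA
  simp only [mul_zero, zero_add] at hA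
  -- hA : (2I)^(m+1) * R' = (z-1)^(m+1) * ((P1:ℂ) * (-2I/(z-1)^2))
  -- now solve for the evaluations
  have hRm : (Rpoly c d m).eval z = (P0 : ℂ) / w ^ m := by
    apply mul_left_cancel₀ (pow_ne_zero m h2I)
    rw [hB, hzm1]
    rw [div_pow]; field_simp
  have hR' : (derivative (Rpoly c d (m+1))).eval z
      = (P1 : ℂ) * (Complex.I / 2) * (w / w ^ m) := by
    apply mul_left_cancel₀ (pow_ne_zero (m+1) h2I)
    rw [hA, hzm1]
    rw [div_pow, div_pow]
    field_simp
    linear_combination (-(P1:ℂ) * w^(m+1)) * Complex.I_sq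
  -- the positive real value
  refine ⟨(1 + τ^2) / (1 + τ^2)^m * (P1 * P0) / 4, ?_, ?_⟩
  · have h1 : (0:ℝ) < 1 + τ^2 := by positivity
    have h2 : (0:ℝ) < (1 + τ^2)^m := by positivity
    have h3 : (0:ℝ) < (1 + τ^2) / (1 + τ^2)^m := by positivity
    calc (0:ℝ) < ((1 + τ^2) / (1 + τ^2)^m) * (P1 * P0) / 4 := by
          have := mul_pos h3 hpos
          linarith
      _ = (1 + τ^2) / (1 + τ^2)^m * (P1 * P0) / 4 := by ring
  · -- the main identity
    rw [hz, mul_zero, sub_zero, Nat.add_sub_cancel, hRm, hR']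
    have hexp : (-(((m:ℕ)+1 : ℕ) : ℤ) + 2) = 1 - (m : ℤ) := by push_cast; ring
    rw [hexp, zpow_sub₀ hz0, zpow_one, zpow_natCast]
    have hzval : z = ((τ:ℂ) + Complex.I) / w := by
      rw [eq_div_iff hw]; exact hzw
    have hquad : ((τ:ℂ) + Complex.I) * w = 1 + (τ:ℂ)^2 := by
      rw [hwdef]
      linear_combination -Complex.I_sq
    have hcast : ((1 + τ^2 : ℝ) : ℂ) = ((τ:ℂ) + Complex.I) * w := by
      push_cast
      rw [hquad]
    have hinv : (z - 1)⁻¹ = w / (2 * Complex.I) := by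
      rw [hzm1, inv_div]
    have hzm : z^m = ((τ:ℂ)+Complex.I)^m / w^m := by rw [hzval, div_pow]
    have hwm : w^m ≠ 0 := pow_ne_zero _ hw
    have hwim : ((τ:ℂ)+Complex.I)^m ≠ 0 := pow_ne_zero _ hwi
    push_cast
    rw [← hquad, mul_pow, hinv, hzm, hzval]
    field_simp
    ring_nf
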